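/- Let G be a finite group, V an abelian normal subgroup, H ≤ G with G = HV, and suppose [H,V] is a proper subgroup of V while N_V(H) ≤ [H,V]. Then H is not pronormal in G. -/

import Mathlib

open scoped Pointwise
open scoped commutatorElement


/-- The conjugate subgroup `H^g = g H g⁻¹` (conjugation by `g`). -/
def conjSub {G : Type*} [Group G] (g : G) (H : Subgroup G) : Subgroup G :=
  H.map (MulAut.conj g).toMonoidHom

/-- A subgroup `H` of `G` is pronormal in `G` if for every `g ∈ G` the subgroups `H` and
`H^g` are conjugate by an element of `⟨H, H^g⟩`. -/
def IsPronormal {G : Type*} [Group G] (H : Subgroup G) : Prop :=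
  ∀ g : G, ∃ x ∈ H ⊔ conjSub g H, conjSub x H = conjSub g H

lemma mem_conjSub {G : Type*} [Group G] {g x : G} {K : Subgroup G} :
    x ∈ conjSub g K ↔ g⁻¹ * x * g ∈ K := by
  rw [conjSub, Subgroup.mem_map_equiv]
  simp [mul_assoc]

lemma conjSub_mul {G : Type*} [Group G] (a b : G) (K : Subgroup G) :
    conjSub (a * b) K = conjSub a (conjSub b K) := by
  ext x
  simp only [mem_conjSub, mul_inv_rev, mul_assoc]

lemma conjSub_self {G : Type*} [Group G] {h : G} {K : Subgroup G} (hh : h ∈ K) :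
    conjSub h K = K := by
  ext x
  rw [mem_conjSub]
  constructor
  · intro hx
    have := mul_mem (mul_mem hh hx) (inv_mem hh)
    convert this using 1; group
  · intro hx
    exact mul_mem (mul_mem (inv_mem hh) hx) hh

lemma conjSub_normal {G : Type*} [Group G] (g : G) {K : Subgroup G} (hK : K.Normal) :
    conjSub g K = K := by
  ext x
  rw [mem_conjSub]
  constructor
  · intro hx
    simpa [mul_assoc] using hK.conj_mem _ hx g
  · intro hx
    simpa [mul_assoc] using hK.conj_mem _ hx g⁻¹

lemma mem_normalizer_of_conjSub {G : Type*} [Group G] {g : G} {K : Subgroup G}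
    (h : conjSub g K = K) : g ∈ Subgroup.normalizer (K : Set G) := by
  rw [Subgroup.mem_normalizer_iff]
  intro x
  constructor
  · intro hx
    have : g * x * g⁻¹ ∈ conjSub g K := by
      rw [mem_conjSub]
      convert hx using 1; group
    rwa [h] at this
  · intro hx
    rw [← h, mem_conjSub] at hx
    convert hx using 1; group

/-- Let `V` be an abelian normal subgroup of a finite group `G` with
`G = HV`. If `[H, V] < V` and `N_V(H) ≤ [H, V]`, then `H` is not pronormal in `G`. -/
theorem stmt15 {G : Type*} [Group G] [Finite G] (H V : Subgroup G) [V.Normal]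
    (hab : ∀ x ∈ V, ∀ y ∈ V, x * y = y * x) (hG : H ⊔ V = ⊤)
    (hlt : ⁅H, V⁆ < V) (hN : V ⊓ Subgroup.normalizer (H : Set G) ≤ ⁅H, V⁆) :
    ¬ IsPronormal H := by
  intro hpro
  set N : Subgroup G := ⁅H, V⁆ with hNdef
  have hNV : N ≤ V := Subgroup.commutator_le_right H V
  -- N is normal in G
  have hHn : H ≤ Subgroup.normalizer (N : Set G) := by
    intro h hh
    apply mem_normalizer_of_conjSub
    show Subgroup.map _ _ = _
    rw [hNdef, Subgroup.map_commutator]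
    rw [show Subgroup.map (MulAut.conj h).toMonoidHom H = conjSub h H from rfl,
        show Subgroup.map (MulAut.conj h).toMonoidHom V = conjSub h V from rfl,
        conjSub_self hh, conjSub_normal h ‹V.Normal›]
  have hVn : V ≤ Subgroup.normalizer (N : Set G) := by
    intro v hv
    rw [Subgroup.mem_normalizer_iff]
    intro x
    constructor
    · intro hx
      have hxV : x ∈ V := hNV hx
      have : v * x * v⁻¹ = x := by
        rw [hab v hv x hxV]; group
      rwa [this]
    · intro hx
      have hxV : v * x * v⁻¹ ∈ V := hNV hx
      have hx2 : x ∈ V := by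
        have := mul_mem (mul_mem (inv_mem hv) hxV) hv
        convert this using 1; group
      have : v * x * v⁻¹ = x := by
        rw [hab v hv x hx2]; group
      rwa [this] at hx
  have hNnormal : N.Normal := by
    rw [← Subgroup.normalizer_eq_top_iff]
    rw [← top_le_iff, ← hG]
    exact sup_le hHn hVn
  -- pick v ∈ V \ N
  obtain ⟨v, hvV, hvN⟩ := SetLike.exists_of_lt hlt
  obtain ⟨x, hx, hconj⟩ := hpro v
  -- conjSub v H ≤ H ⊔ N
  have hsub : conjSub v H ≤ H ⊔ N := by
    intro y hy
    rw [mem_conjSub] at hy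
    set h := v⁻¹ * y * v with hh
    have hyeq : y = ⁅v, h⁆ * h := by rw [hh]; group
    rw [hyeq]
    have hcomm : ⁅v, h⁆ ∈ N := by
      rw [hNdef, Subgroup.commutator_comm]
      exact Subgroup.commutator_mem_commutator hvV hy
    exact mul_mem (Subgroup.mem_sup_right hcomm) (Subgroup.mem_sup_left hy)
  have hxNH : x ∈ N ⊔ H := by
    rw [sup_comm]
    exact sup_le le_sup_left hsub hx
  -- write x = u * h with u ∈ N, h ∈ H
  have hxmem : (x : G) ∈ ((N : Set G) * (H : Set G)) := by
    rw [← Subgroup.normal_mul]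
    exact hxNH
  obtain ⟨u, hu, h, hh, hxuh⟩ := hxmem
  -- conjSub u H = conjSub v H
  have hcu : conjSub u H = conjSub v H := by
    rw [← hconj, ← hxuh, conjSub_mul, conjSub_self hh]
  -- v⁻¹ * u normalizes H
  have hnorm : v⁻¹ * u ∈ Subgroup.normalizer (H : Set G) := by
    apply mem_normalizer_of_conjSub
    rw [conjSub_mul, hcu, ← conjSub_mul, inv_mul_cancel]
    ext y
    simp [mem_conjSub]
  have hvuV : v⁻¹ * u ∈ V := mul_mem (inv_mem hvV) (hNV hu)
  have hvuN : v⁻¹ * u ∈ N := hN ⟨hvuV, hnorm⟩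
  have : v ∈ N := by
    have := mul_mem hu (inv_mem hvuN)
    convert this using 1; group
  exact hvN this
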